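/- arXiv:2010.07294 — 3 statements merged into one kernel-verified Lean document; each statement's English description precedes it below -/
import Mathlib

section
/- For any m ∈ ℕ, k with 0 ≤ k ≤ m, and y ≥ m·2^m with S_m(y) = k, we have T^m(y) < y · 3^k / 2^(m-1) (as real numbers). -/
open Filter

/-- The (accelerated) Collatz map. -/
def T (n : ℕ) : ℕ := if n % 2 = 0 then n / 2 else (3 * n + 1) / 2

/-- Parity of the k-th iterate. -/
def X (k y : ℕ) : ℕ := T^[k] y % 2

/-- S_m(y) = X_0(y) + ... + X_m(y). -/
def S (m y : ℕ) : ℕ := ∑ k ∈ Finset.range (m + 1), X k y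

/-- Upper natural density. -/
noncomputable def ud (A : Set ℕ) : ℝ :=
  Filter.limsup (fun n => ((A ∩ Set.Iic n).ncard : ℝ) / n) Filter.atTop

/-- Positive upper density preserving. -/
def PDP (H : Set ℕ → Set ℕ) : Prop := ∀ A : Set ℕ, 0 < ud A → 0 < ud (H A)

/-- H_f for real-valued f. -/
def Hf (f : ℕ → ℝ) (A : Set ℕ) : Set ℕ :=
  {m | ∃ n ∈ A, ∃ k : ℕ, T^[k] n = m ∧ (m : ℝ) < f n}

/-- H_f for ℕ-valued f. -/
def HfN (f : ℕ → ℕ) (A : Set ℕ) : Set ℕ :=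
  {m | ∃ n ∈ A, ∃ k : ℕ, T^[k] n = m ∧ m < f n}

/-- S has natural density one. -/
def DensityOne (A : Set ℕ) : Prop :=
  Filter.Tendsto (fun n => ((A ∩ Set.Iic n).ncard : ℝ) / n) Filter.atTop (nhds 1)

lemma key (y : ℕ) : ∀ j, 2 ^ j * T^[j] y ≤ 3 ^ (∑ i ∈ Finset.range j, X i y) * (y + 2 ^ j) := by
  intro j
  induction j with
  | zero => simp
  | succ j ih =>
    rw [Function.iterate_succ_apply', Finset.sum_range_succ]
    set n := T^[j] y with hn
    set s := ∑ i ∈ Finset.range j, X i y with hs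
    rcases Nat.even_or_odd n with he | ho
    · have hx : X j y = 0 := by
        simp [X, ← hn, Nat.even_iff.mp he]
      have hT : T n = n / 2 := by simp [T, Nat.even_iff.mp he]
      have h2 : 2 * (n / 2) = n := Nat.two_mul_div_two_of_even he
      calc 2 ^ (j+1) * T n = 2 ^ j * (2 * (n / 2)) := by rw [hT]; ring
        _ = 2 ^ j * n := by rw [h2]
        _ ≤ 3 ^ s * (y + 2 ^ j) := ih
        _ ≤ 3 ^ (s + X j y) * (y + 2 ^ (j+1)) := by
            rw [hx, add_zero]
            exact Nat.mul_le_mul_left _ (by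
              have := Nat.pow_le_pow_right (by norm_num : 1 ≤ 2) (Nat.le_succ j)
              omega)
    · have hx : X j y = 1 := by
        simp [X, ← hn, Nat.odd_iff.mp ho]
      have hT : T n = (3 * n + 1) / 2 := by simp [T, Nat.odd_iff.mp ho]
      have he : Even (3 * n + 1) := by
        rcases ho with ⟨c, hc⟩; exact ⟨3*c+2, by omega⟩
      have h2 : 2 * ((3 * n + 1) / 2) = 3 * n + 1 := Nat.two_mul_div_two_of_even he
      calc 2 ^ (j+1) * T n = 2 ^ j * (2 * ((3*n+1)/2)) := by rw [hT]; ring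
        _ = 3 * (2 ^ j * n) + 2 ^ j := by rw [h2]; ring
        _ ≤ 3 * (3 ^ s * (y + 2 ^ j)) + 2 ^ j := by gcongr
        _ ≤ 3 ^ (s + X j y) * (y + 2 ^ (j+1)) := by
            rw [hx, pow_succ, pow_succ 2 j]
            have h3 : 1 ≤ 3 ^ s := Nat.one_le_pow _ _ (by norm_num)
            nlinarith [pow_pos (by norm_num : 0 < 2) j]

theorem stmt4 (m k y : ℕ) (hm : 1 ≤ m) (hk : k ≤ m)
    (hy : m * 2 ^ m ≤ y) (hS : S m y = k) :
    (T^[m] y : ℝ) < (y : ℝ) * 3 ^ k / 2 ^ (m - 1) := by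
  have hs : ∑ i ∈ Finset.range m, X i y ≤ k := by
    rw [← hS, S, Finset.sum_range_succ]; omega
  have hb : 2 ^ m * T^[m] y ≤ 3 ^ k * (y + 2 ^ m) :=
    le_trans (key y m) (by gcongr <;> norm_num)
  -- main case: 2^m < y, plus special case m = 1, y = 2
  have hnat : 2 ^ (m - 1) * T^[m] y < 3 ^ k * y := by
    rcases lt_or_ge (2 ^ m) y with hlt | hle
    · have h1 : 2 ^ m * T^[m] y < 3 ^ k * (2 * y) := by
        calc 2 ^ m * T^[m] y ≤ 3 ^ k * (y + 2 ^ m) := hb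
          _ < 3 ^ k * (2 * y) := by
              have h3 : 1 ≤ 3 ^ k := Nat.one_le_pow _ _ (by norm_num)
              nlinarith
      have hm2 : 2 ^ m = 2 * 2 ^ (m - 1) := by
        rw [← pow_succ']; congr 1; omega
      have h1' : 2 * (2 ^ (m-1) * T^[m] y) < 2 * (3 ^ k * y) := by
        calc 2 * (2 ^ (m-1) * T^[m] y) = 2 ^ m * T^[m] y := by rw [hm2]; ring
          _ < 3 ^ k * (2 * y) := h1
          _ = 2 * (3 ^ k * y) := by ring
      exact Nat.lt_of_mul_lt_mul_left h1'
    · -- y ≤ 2^m combined with m * 2^m ≤ y forces m = 1, y = 2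
      have hm1 : m = 1 := by nlinarith [Nat.one_le_two_pow (n := m)]
      subst hm1
      have hy2 : y = 2 := by simp at hy hle; omega
      subst hy2
      have : T^[1] 2 = 1 := by simp [T]
      rw [this]
      have h3 : 1 ≤ 3 ^ k := Nat.one_le_pow _ _ (by norm_num)
      simp; nlinarith
  -- convert to reals
  have h2 : (0:ℝ) < 2 ^ (m - 1) := by positivity
  rw [lt_div_iff₀ h2]
  have := hnat
  calc (T^[m] y : ℝ) * 2 ^ (m-1) = ((2 ^ (m-1) * T^[m] y : ℕ) : ℝ) := by
        push_cast; ring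
    _ < ((3 ^ k * y : ℕ) : ℝ) := by exact_mod_cast Nat.cast_lt.mpr hnat
    _ = (y:ℝ) * 3 ^ k := by push_cast; ring
end

section
/- If H_f with f(y) = y^c is positive upper density preserving for some fixed 0 < c < 1, then H_g with g(y) = y^{c'} is positive upper density preserving for every c' > 0, since iterates of f eventually lie below g on all sufficiently large y and H respects composition and pointwise comparison. -/
open Filter

lemma card_bound (A : Set ℕ) (n : ℕ) : ((A ∩ Set.Iic n).ncard : ℝ) / n ≤ 2 := by
  rcases Nat.eq_zero_or_pos n with rfl | hn
  · simp
  have h1 : (A ∩ Set.Iic n).ncard ≤ (Set.Iic n).ncard :=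
    Set.ncard_le_ncard Set.inter_subset_right (Set.finite_Iic n)
  have h2 : (Set.Iic n).ncard = n + 1 := by
    rw [← Nat.card_coe_set_eq, Nat.card_eq_card_toFinset]
    simp
  rw [div_le_iff₀ (by exact_mod_cast hn)]
  have h3 : ((A ∩ Set.Iic n).ncard : ℝ) ≤ n + 1 := by
    rw [h2] at h1; exact_mod_cast h1
  nlinarith [h3, (Nat.one_le_cast (α := ℝ)).2 hn]

lemma ud_mono {A B : Set ℕ} (h : A ⊆ B) : ud A ≤ ud B := by
  apply Filter.limsup_le_limsup
  · apply Eventually.of_forall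
    intro n
    apply div_le_div_of_nonneg_right ?_ (Nat.cast_nonneg n)
    exact_mod_cast Set.ncard_le_ncard (Set.inter_subset_inter_left _ h)
      ((Set.finite_Iic n).subset Set.inter_subset_right)
  · exact (Filter.isBoundedUnder_of
      ⟨0, fun n => by positivity⟩ : Filter.IsBoundedUnder (· ≥ ·) Filter.atTop _).isCoboundedUnder_le
  · exact Filter.isBoundedUnder_of ⟨2, fun n => card_bound B n⟩

lemma Hf_mono_set (f : ℕ → ℝ) {A B : Set ℕ} (h : A ⊆ B) : Hf f A ⊆ Hf f B := by
  rintro m ⟨n, hn, k, hk, hm⟩; exact ⟨n, h hn, k, hk, hm⟩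

lemma Hf_mono_fun {f g : ℕ → ℝ} (h : ∀ n, f n ≤ g n) (A : Set ℕ) : Hf f A ⊆ Hf g A := by
  rintro m ⟨n, hn, k, hk, hm⟩; exact ⟨n, hn, k, hk, hm.trans_le (h n)⟩

lemma Hf_comp (a b : ℝ) (ha : 0 ≤ a) (A : Set ℕ) :
    Hf (fun y => (y : ℝ) ^ a) (Hf (fun y => (y : ℝ) ^ b) A) ⊆
      Hf (fun y => (y : ℝ) ^ (b * a)) A := by
  rintro m ⟨n', ⟨n, hn, j, hj, hn'⟩, k, hk, hm⟩
  refine ⟨n, hn, k + j, ?_, ?_⟩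
  · rw [Function.iterate_add_apply, hj, hk]
  · calc (m : ℝ) < (n' : ℝ) ^ a := hm
      _ ≤ ((n : ℝ) ^ b) ^ a := Real.rpow_le_rpow (by positivity) hn'.le ha
      _ = (n : ℝ) ^ (b * a) := (Real.rpow_mul (by positivity) b a).symm

theorem stmt17 (c : ℝ) (hc0 : 0 < c) (hc1 : c < 1)
    (h : PDP (Hf (fun y => (y : ℝ) ^ c))) :
    ∀ c' : ℝ, 0 < c' → PDP (Hf (fun y => (y : ℝ) ^ c')) := by
  intro c' hc'
  -- find j ≥ 1 with c ^ j ≤ c'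
  obtain ⟨N, hN⟩ := ((tendsto_pow_atTop_nhds_zero_of_lt_one hc0.le hc1).eventually
    (gt_mem_nhds hc')).exists
  have hj : c ^ (N + 1) ≤ c' := by
    calc c ^ (N + 1) = c ^ N * c := pow_succ c N
      _ ≤ c ^ N * 1 := by nlinarith [pow_nonneg hc0.le N]
      _ ≤ c' := by rw [mul_one]; exact hN.le
  -- iterated inclusion
  have key : ∀ j : ℕ, ∀ A : Set ℕ,
      (Hf (fun y => (y : ℝ) ^ c))^[j + 1] A ⊆ Hf (fun y => (y : ℝ) ^ c ^ (j + 1)) A := by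
    intro j
    induction j with
    | zero => intro A; simp [pow_one]
    | succ j ih =>
      intro A
      rw [Function.iterate_succ_apply']
      calc Hf (fun y => (y : ℝ) ^ c) ((Hf (fun y => (y : ℝ) ^ c))^[j + 1] A)
          ⊆ Hf (fun y => (y : ℝ) ^ c) (Hf (fun y => (y : ℝ) ^ c ^ (j + 1)) A) :=
            Hf_mono_set _ (ih A)
        _ ⊆ Hf (fun y => (y : ℝ) ^ (c ^ (j + 1) * c)) A := Hf_comp c (c ^ (j + 1)) hc0.le A
        _ = Hf (fun y => (y : ℝ) ^ c ^ (j + 2)) A := by rw [← pow_succ]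
  -- iterated PDP
  have hpdp : ∀ (j : ℕ) (A : Set ℕ), 0 < ud A →
      0 < ud ((Hf (fun y => (y : ℝ) ^ c))^[j + 1] A) := by
    intro j
    induction j with
    | zero => intro A hA; exact h A hA
    | succ j ih =>
      intro A hA
      rw [Function.iterate_succ_apply']
      exact h _ (ih A hA)
  intro A hA
  have h1 := hpdp N A hA
  have h2 : (Hf (fun y => (y : ℝ) ^ c))^[N + 1] A ⊆ Hf (fun y => (y : ℝ) ^ c') A := by
    refine (key N A).trans (Hf_mono_fun (fun n => ?_) A)
    rcases Nat.eq_zero_or_pos n with rfl | hn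
    · simp [Real.zero_rpow (pow_pos hc0 (N+1)).ne', Real.zero_rpow hc'.ne']
    · exact Real.rpow_le_rpow_of_exponent_le (by exact_mod_cast hn) hj
  calc (0:ℝ) < ud ((Hf (fun y => (y : ℝ) ^ c))^[N + 1] A) := h1
    _ ≤ ud (Hf (fun y => (y : ℝ) ^ c') A) := ud_mono h2
end

section
/- For any d > 1/2, the proportion U(m,d)/2^m tends to 1 as m → ∞, where U(m,d) = |{y ∈ ℕ : 0 ≤ y < 2^m and S_m(y) ≤ m·d}|. -/
open Filter Finset

/-- U(m,d) = number of residues y < 2^m with S_m(y) ≤ m d. -/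
noncomputable def U (m : ℕ) (d : ℝ) : ℕ :=
  {y : ℕ | y < 2 ^ m ∧ (S m y : ℝ) ≤ m * d}.ncard



lemma X_lt_two (k y : ℕ) : X k y < 2 := Nat.mod_lt _ (by norm_num)

lemma X_succ (k y : ℕ) : X (k+1) y = X k (T y) := by
  simp [X, Function.iterate_succ_apply]

lemma X_zero (y : ℕ) : X 0 y = y % 2 := rfl

lemma parity_inj : ∀ m y y' : ℕ, (∀ k < m, X k y = X k y') → y ≡ y' [MOD 2^m] := by
  intro m
  induction m with
  | zero => intro y y' _; simp [Nat.ModEq, Nat.mod_one]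
  | succ m ih =>
    intro y y' h
    have h0 : y % 2 = y' % 2 := h 0 (Nat.succ_pos m)
    have ih' : T y ≡ T y' [MOD 2^m] := by
      apply ih
      intro k hk
      have := h (k+1) (by omega)
      simpa [X_succ] using this
    have h2 : 2 * T y ≡ 2 * T y' [MOD 2^(m+1)] := by
      have := Nat.ModEq.mul_left' (c := 2) ih'
      simpa [pow_succ, mul_comm] using this
    rcases Nat.even_or_odd y with he | ho
    · have hy2 : y % 2 = 0 := Nat.even_iff.mp he
      have hy'2 : y' % 2 = 0 := by omega
      have e1 : 2 * T y = y := by simp only [T, hy2, if_pos]; omega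
      have e2 : 2 * T y' = y' := by simp only [T, hy'2]; simp; omega
      rwa [e1, e2] at h2
    · have hy2 : y % 2 = 1 := Nat.odd_iff.mp ho
      have hy'2 : y' % 2 = 1 := by omega
      have e1 : 2 * T y = 3 * y + 1 := by simp only [T, hy2]; simp; omega
      have e2 : 2 * T y' = 3 * y' + 1 := by simp only [T, hy'2]; simp; omega
      rw [e1, e2] at h2
      have h3 : 3 * y ≡ 3 * y' [MOD 2^(m+1)] := Nat.ModEq.add_right_cancel' 1 h2
      exact Nat.ModEq.cancel_left_of_coprime (by
        have : Nat.Coprime (2^(m+1)) 3 := (Nat.Coprime.pow_right _ (by decide) : Nat.Coprime 3 (2^(m+1))).symm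
        exact Nat.Coprime.gcd_eq_one this) h3


lemma var_id : ∀ m : ℕ, ∑ j ∈ range (m+1), (m.choose j : ℝ) * (2*(j:ℝ) - m)^2 = (m:ℝ) * 2^m := by
  intro m
  induction m with
  | zero => norm_num
  | succ m ih =>
    have hsum : ∑ j ∈ range (m+1), (m.choose j : ℝ) = 2^m := by
      rw [← Nat.cast_sum]
      rw [Nat.sum_range_choose]
      push_cast; ring
    have shift : ∀ G : ℕ → ℝ,
        ∑ j ∈ range (m+1), (m.choose (j+1):ℝ) * G (j+1)
          = ∑ j ∈ range (m+1), (m.choose j:ℝ) * G j - G 0 := by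
      intro G
      have h1 := Finset.sum_range_succ' (fun j => (m.choose j:ℝ) * G j) (m+1)
      have h2 := Finset.sum_range_succ (fun j => (m.choose j:ℝ) * G j) (m+1)
      simp only [Nat.choose_succ_self, Nat.cast_zero, zero_mul, add_zero,
        Nat.choose_zero_right, Nat.cast_one, one_mul] at h1 h2
      linarith [h1, h2]
    rw [Finset.sum_range_succ']
    have hc : ∀ j ∈ range (m+1),
        ((m+1).choose (j+1):ℝ) * (2*((j+1:ℕ):ℝ) - ((m+1:ℕ):ℝ))^2
          = (m.choose j : ℝ) * (2*(j:ℝ)+1 - m)^2 + (m.choose (j+1):ℝ) * (2*(j:ℝ)+1 - m)^2 := by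
      intro j _
      rw [Nat.choose_succ_succ]
      push_cast
      ring
    rw [Finset.sum_congr rfl hc, Finset.sum_add_distrib]
    have hshift := shift (fun j => (2*(j:ℝ) - 1 - m)^2)
    have e1 : ∑ j ∈ range (m+1), (m.choose (j+1):ℝ) * (2*(j:ℝ)+1 - m)^2
        = ∑ j ∈ range (m+1), (m.choose j:ℝ) * (2*(j:ℝ) - 1 - m)^2 - (2*((0:ℕ):ℝ) - 1 - (m:ℝ))^2 := by
      rw [← hshift]
      apply Finset.sum_congr rfl
      intro j _
      push_cast
      ring_nf
    rw [e1]
    have comb : ∑ j ∈ range (m+1), (m.choose j : ℝ) * (2*(j:ℝ)+1 - m)^2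
        + ∑ j ∈ range (m+1), (m.choose j:ℝ) * (2*(j:ℝ) - 1 - m)^2
        = 2 * (∑ j ∈ range (m+1), (m.choose j : ℝ) * (2*(j:ℝ) - m)^2)
          + 2 * (∑ j ∈ range (m+1), (m.choose j : ℝ)) := by
      rw [Finset.mul_sum, Finset.mul_sum, ← Finset.sum_add_distrib, ← Finset.sum_add_distrib]
      apply Finset.sum_congr rfl
      intro j _
      ring
    have h0 : ((m+1).choose 0 : ℝ) * (2*((0:ℕ):ℝ) - ((m+1:ℕ):ℝ))^2 = (1+(m:ℝ))^2 := by
      simp [Nat.choose_zero_right]; push_cast; ring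
    rw [h0]
    push_cast
    linear_combination comb + 2*ih + 2*hsum


lemma sum_powerset_sq (m : ℕ) :
    ∑ s ∈ (range m).powerset, (2*(s.card:ℝ) - m)^2 = (m:ℝ) * 2^m := by
  rw [Finset.sum_powerset, Finset.card_range, ← var_id m]
  apply Finset.sum_congr rfl
  intro j _
  have h : ∀ s ∈ Finset.powersetCard j (range m), (2*(s.card:ℝ) - m)^2 = (2*(j:ℝ) - m)^2 := by
    intro s hs; rw [(Finset.mem_powersetCard.mp hs).2]
  rw [Finset.sum_congr rfl h, Finset.sum_const, Finset.card_powersetCard, Finset.card_range,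
    nsmul_eq_mul]

noncomputable def phi (m y : ℕ) : Finset ℕ := (range m).filter (fun k => X k y = 1)

lemma W_card (m y : ℕ) : ∑ k ∈ range m, X k y = (phi m y).card := by
  rw [phi, Finset.card_filter]
  apply Finset.sum_congr rfl
  intro k _
  have := X_lt_two k y
  by_cases h : X k y = 1
  · simp [h]
  · simp [h]; omega

lemma phi_inj (m : ℕ) : ∀ y ∈ range (2^m), ∀ y' ∈ range (2^m), phi m y = phi m y' → y = y' := by
  intro y hy y' hy' hphi
  have hX : ∀ k < m, X k y = X k y' := by
    intro k hk
    have h1 : (k ∈ phi m y) ↔ (k ∈ phi m y') := by rw [hphi]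
    simp only [phi, Finset.mem_filter, Finset.mem_range] at h1
    have h2 := X_lt_two k y
    have h3 := X_lt_two k y'
    by_cases h : X k y = 1
    · have := (h1.mp ⟨hk, h⟩).2; omega
    · by_cases h' : X k y' = 1
      · have := (h1.mpr ⟨hk, h'⟩).2; omega
      · omega
  have hmod : y % 2^m = y' % 2^m := parity_inj m y y' hX
  rw [Nat.mod_eq_of_lt (mem_range.mp hy), Nat.mod_eq_of_lt (mem_range.mp hy')] at hmod
  exact hmod

lemma card_bound_s18 (m : ℕ) (d : ℝ) (hc : 0 < 2*(m:ℝ)*d - m - 2) :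
    ((((range (2^m)).filter (fun y => ¬ ((S m y:ℝ) ≤ m*d))).card : ℝ)) * (2*(m:ℝ)*d - m - 2)^2
      ≤ (m:ℝ) * 2^m := by
  set c : ℝ := 2*(m:ℝ)*d - m - 2 with hcdef
  set B := (range (2^m)).filter fun y => ¬ ((S m y:ℝ) ≤ m*d) with hB
  have step1 : (B.card : ℝ) * c^2 ≤ ∑ y ∈ B, (2*((∑ k ∈ range m, X k y : ℕ):ℝ) - m)^2 := by
    rw [← nsmul_eq_mul, ← Finset.sum_const]
    apply Finset.sum_le_sum
    intro y hy
    have hyB : ¬ ((S m y:ℝ) ≤ m*d) := (Finset.mem_filter.mp hy).2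
    push_neg at hyB
    have hsplit : S m y = (∑ k ∈ range m, X k y) + X m y := Finset.sum_range_succ _ m
    have hXm : X m y ≤ 1 := Nat.lt_succ_iff.mp (X_lt_two m y)
    have hX1 : ((X m y : ℕ):ℝ) ≤ 1 := by exact_mod_cast hXm
    have hS : (S m y : ℝ) = ((∑ k ∈ range m, X k y : ℕ):ℝ) + ((X m y : ℕ):ℝ) := by
      rw [hsplit]; push_cast; ring
    have hle : c ≤ 2*((∑ k ∈ range m, X k y : ℕ):ℝ) - m := by
      rw [hcdef]; linarith
    exact pow_le_pow_left₀ hc.le hle 2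
  have step2 : ∑ y ∈ B, (2*((∑ k ∈ range m, X k y : ℕ):ℝ) - m)^2
      ≤ ∑ y ∈ range (2^m), (2*((∑ k ∈ range m, X k y : ℕ):ℝ) - m)^2 :=
    Finset.sum_le_sum_of_subset_of_nonneg (Finset.filter_subset _ _) (fun y _ _ => sq_nonneg _)
  have step3 : ∑ y ∈ range (2^m), (2*((∑ k ∈ range m, X k y : ℕ):ℝ) - m)^2
      = ∑ y ∈ range (2^m), (2*((phi m y).card:ℝ) - m)^2 := by
    apply Finset.sum_congr rfl; intro y _; rw [W_card]
  have step4 : ∑ y ∈ range (2^m), (2*((phi m y).card:ℝ) - m)^2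
      = ∑ s ∈ (range (2^m)).image (phi m), (2*(s.card:ℝ) - m)^2 :=
    by rw [Finset.sum_image (phi_inj m)]
  have step5 : ∑ s ∈ (range (2^m)).image (phi m), (2*(s.card:ℝ) - m)^2
      ≤ ∑ s ∈ (range m).powerset, (2*(s.card:ℝ) - m)^2 := by
    apply Finset.sum_le_sum_of_subset_of_nonneg
    · intro s hs
      obtain ⟨y, _, rfl⟩ := Finset.mem_image.mp hs
      exact Finset.mem_powerset.mpr (Finset.filter_subset _ _)
    · exact fun _ _ _ => sq_nonneg _
  have := sum_powerset_sq m
  linarith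


theorem stmt18 (d : ℝ) (hd : 1 / 2 < d) :
    Filter.Tendsto (fun m : ℕ => (U m d : ℝ) / 2 ^ m) Filter.atTop (nhds 1) := by
  have he0 : (0:ℝ) < 2*d - 1 := by linarith
  have hU : ∀ m : ℕ, (U m d : ℝ) = ((range (2^m)).filter (fun y => (S m y:ℝ) ≤ m*d)).card := by
    intro m
    have hset : {y : ℕ | y < 2^m ∧ (S m y:ℝ) ≤ m*d}
        = ↑((range (2^m)).filter (fun y => (S m y:ℝ) ≤ m*d)) := by
      ext y; simp [Finset.mem_filter, Finset.mem_range]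
    rw [U, hset, Set.ncard_coe_finset]
  set b : ℕ → ℝ :=
    fun m => ((((range (2^m)).filter (fun y => ¬((S m y:ℝ) ≤ m*d))).card : ℝ)) / 2^m with hbdef
  have hsplit : ∀ m : ℕ, (U m d : ℝ) / 2^m = 1 - b m := by
    intro m
    have hcard : ((range (2^m)).filter (fun y => (S m y:ℝ) ≤ m*d)).card
        + ((range (2^m)).filter (fun y => ¬((S m y:ℝ) ≤ m*d))).card = 2^m := by
      rw [Finset.card_filter_add_card_filter_not, Finset.card_range]
    have hpow : (0:ℝ) < 2^m := by positivity
    have hcard' : (((range (2^m)).filter (fun y => (S m y:ℝ) ≤ m*d)).card : ℝ)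
        + (((range (2^m)).filter (fun y => ¬((S m y:ℝ) ≤ m*d))).card : ℝ) = 2^m := by
      exact_mod_cast hcard
    rw [hU m, hbdef]
    simp only
    rw [show (((range (2^m)).filter (fun y => (S m y:ℝ) ≤ m*d)).card : ℝ)
        = 2^m - (((range (2^m)).filter (fun y => ¬((S m y:ℝ) ≤ m*d))).card : ℝ) from by linarith,
      sub_div, div_self hpow.ne']
  have hb : Tendsto b atTop (nhds 0) := by
    apply tendsto_of_tendsto_of_tendsto_of_le_of_le' tendsto_const_nhds
      (tendsto_const_div_atTop_nhds_zero_nat (4/(2*d-1)^2))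
    · exact Eventually.of_forall fun m => by positivity
    · have hev : ∀ᶠ m : ℕ in atTop, (4:ℝ)/(2*d-1) ≤ m :=
        tendsto_natCast_atTop_atTop.eventually_ge_atTop _
      filter_upwards [hev, eventually_ge_atTop 1] with m hm hm1
      have hm1' : (1:ℝ) ≤ m := by exact_mod_cast hm1
      have hM4 : (4:ℝ) ≤ (m:ℝ) * (2*d-1) := by
        calc (4:ℝ) = (4/(2*d-1)) * (2*d-1) := by field_simp
          _ ≤ m * (2*d-1) := mul_le_mul_of_nonneg_right hm he0.le
      have hc : (0:ℝ) < 2*(m:ℝ)*d - m - 2 := by nlinarith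
      have hcb := card_bound_s18 m d hc
      have hpow : (0:ℝ) < 2^m := by positivity
      have h1 : b m ≤ (m:ℝ) / (2*(m:ℝ)*d - m - 2)^2 := by
        rw [hbdef]
        simp only
        rw [div_le_div_iff₀ hpow (by positivity)]
        linarith [hcb]
      have hcge : (m:ℝ)*(2*d-1)/2 ≤ 2*(m:ℝ)*d - m - 2 := by linarith
      have hsq : ((m:ℝ)*(2*d-1)/2)^2 ≤ (2*(m:ℝ)*d - m - 2)^2 :=
        pow_le_pow_left₀ (by positivity) hcge 2
      have h2 : (m:ℝ) / (2*(m:ℝ)*d - m - 2)^2 ≤ (4/(2*d-1)^2) / m := by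
        rw [div_le_div_iff₀ (by positivity) (by linarith)]
        have key : (4/(2*d-1)^2) * (((m:ℝ)*(2*d-1)/2)^2) = (m:ℝ)*(m:ℝ) := by
          field_simp; ring
        have := mul_le_mul_of_nonneg_left hsq (by positivity : (0:ℝ) ≤ 4/(2*d-1)^2)
        linarith
      linarith
  have hfinal := hb.const_sub 1
  rw [sub_zero] at hfinal
  have : (fun m : ℕ => (U m d : ℝ) / 2 ^ m) = fun m => 1 - b m := funext hsplit
  rw [this]
  exact hfinal
end
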